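/- Let G = {(x,y) ∈ {0,1}^m × {0,1}^n : f(x,y) ≤ A(Q,c,d)} be the set of solutions with objective value at most the average. Then |G| ≥ 2^{m+n-2} (assuming m, n ≥ 1). -/

import Mathlib

open Finset

/-- The bipartite boolean quadratic objective f(x,y) = xᵀQy + c·x + d·y,
extended to real vectors. -/
noncomputable def fobj (m n : ℕ) (Q : Fin m → Fin n → ℝ) (c : Fin m → ℝ) (d : Fin n → ℝ)
    (x : Fin m → ℝ) (y : Fin n → ℝ) : ℝ :=
  (∑ i, ∑ j, Q i j * x i * y j) + (∑ i, c i * x i) + (∑ j, d j * y j)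

/-- A boolean vector viewed as a real 0-1 vector. -/
def bv {k : ℕ} (x : Fin k → Bool) : Fin k → ℝ := fun i => if x i then 1 else 0

/-- The average of f over all 2^(m+n) boolean pairs (x,y). -/
noncomputable def avgA (m n : ℕ) (Q : Fin m → Fin n → ℝ) (c : Fin m → ℝ) (d : Fin n → ℝ) : ℝ :=
  (∑ x : Fin m → Bool, ∑ y : Fin n → Bool, fobj m n Q c d (bv x) (bv y)) / 2 ^ (m + n)

def negb {k : ℕ} (x : Fin k → Bool) : Fin k → Bool := fun i => !x i

lemma negb_negb {k : ℕ} (x : Fin k → Bool) : negb (negb x) = x := by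
  funext i; simp [negb]

lemma bv_negb {k : ℕ} (x : Fin k → Bool) (i : Fin k) : bv (negb x) i = 1 - bv x i := by
  simp only [bv, negb]; by_cases h : x i = true <;> simp [h]

lemma four_sum (m n : ℕ) (Q : Fin m → Fin n → ℝ) (c : Fin m → ℝ) (d : Fin n → ℝ)
    (x : Fin m → Bool) (y : Fin n → Bool) :
    fobj m n Q c d (bv x) (bv y) + fobj m n Q c d (bv (negb x)) (bv y)
      + fobj m n Q c d (bv x) (bv (negb y)) + fobj m n Q c d (bv (negb x)) (bv (negb y))
    = (∑ i, ∑ j, Q i j) + 2 * (∑ i, c i) + 2 * (∑ j, d j) := by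
  simp only [fobj, bv_negb]
  have hQ : (∑ i, ∑ j, Q i j * bv x i * bv y j)
      + (∑ i, ∑ j, Q i j * (1 - bv x i) * bv y j)
      + (∑ i, ∑ j, Q i j * bv x i * (1 - bv y j))
      + (∑ i, ∑ j, Q i j * (1 - bv x i) * (1 - bv y j)) = ∑ i, ∑ j, Q i j := by
    rw [← Finset.sum_add_distrib, ← Finset.sum_add_distrib, ← Finset.sum_add_distrib]
    refine Finset.sum_congr rfl fun i _ => ?_
    rw [← Finset.sum_add_distrib, ← Finset.sum_add_distrib, ← Finset.sum_add_distrib]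
    exact Finset.sum_congr rfl fun j _ => by ring
  have hc : (∑ i, c i * bv x i) + (∑ i, c i * (1 - bv x i)) = ∑ i, c i := by
    rw [← Finset.sum_add_distrib]
    exact Finset.sum_congr rfl fun i _ => by ring
  have hd : (∑ j, d j * bv y j) + (∑ j, d j * (1 - bv y j)) = ∑ j, d j := by
    rw [← Finset.sum_add_distrib]
    exact Finset.sum_congr rfl fun j _ => by ring
  linarith

lemma sum_negb {k : ℕ} (g : (Fin k → Bool) → ℝ) : ∑ x, g (negb x) = ∑ x, g x :=
  Function.Bijective.sum_comp
    (Function.Involutive.bijective (fun x => negb_negb x)) g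

lemma avg_eq (m n : ℕ) (Q : Fin m → Fin n → ℝ) (c : Fin m → ℝ) (d : Fin n → ℝ) :
    avgA m n Q c d
      = ((∑ i, ∑ j, Q i j) + 2 * (∑ i, c i) + 2 * (∑ j, d j)) / 4 := by
  set T := (∑ i, ∑ j, Q i j) + 2 * (∑ i, c i) + 2 * (∑ j, d j) with hT
  set F := fun (x : Fin m → Bool) (y : Fin n → Bool) => fobj m n Q c d (bv x) (bv y) with hF
  set S := ∑ x, ∑ y, F x y with hS
  have e1 : ∑ x, ∑ y, F (negb x) y = S := sum_negb (fun x => ∑ y, F x y)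
  have e2 : ∑ x, ∑ y, F x (negb y) = S := by
    rw [Finset.sum_congr rfl (fun x _ => sum_negb (F x))]
  have e3 : ∑ x, ∑ y, F (negb x) (negb y) = S := by
    rw [Finset.sum_congr rfl (fun x _ => sum_negb (fun y => F (negb x) y))]
    exact e1
  have h1 : ∑ x : Fin m → Bool, ∑ y : Fin n → Bool,
      (F x y + F (negb x) y + F x (negb y) + F (negb x) (negb y)) = 4 * S := by
    simp only [Finset.sum_add_distrib]
    rw [e1, e2, e3]; ring
  have h2 : ∑ x : Fin m → Bool, ∑ y : Fin n → Bool,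
      (F x y + F (negb x) y + F x (negb y) + F (negb x) (negb y))
      = (2 : ℝ) ^ (m + n) * T := by
    rw [Finset.sum_congr rfl (fun x _ => Finset.sum_congr rfl
      (fun y _ => four_sum m n Q c d x y))]
    simp only [Finset.sum_add_distrib, Finset.sum_const, Finset.card_univ,
      Fintype.card_fun, Fintype.card_bool, Fintype.card_fin, nsmul_eq_mul, hT]
    push_cast
    rw [pow_add]
    ring
  have key : (4 : ℝ) * S = 2 ^ (m + n) * T := by rw [← h1, h2]
  have hpow : (2 : ℝ) ^ (m + n) ≠ 0 := by positivity
  rw [avgA]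
  field_simp
  linarith

lemma card_filter_false {k : ℕ} (hk : 1 ≤ k) (i0 : Fin k) :
    ((Finset.univ : Finset (Fin k → Bool)).filter (fun x => x i0 = false)).card
      = 2 ^ (k - 1) := by
  classical
  have h2 : 2 ^ k = 2 * 2 ^ (k - 1) := by
    rw [← pow_succ']
    congr 1
    omega
  have hsplit := Finset.card_filter_add_card_filter_not
    (s := (Finset.univ : Finset (Fin k → Bool))) (p := fun x => x i0 = false)
  have hcard : (Finset.univ : Finset (Fin k → Bool)).card = 2 ^ k := by
    simp [Finset.card_univ]
  have hbij : ((Finset.univ : Finset (Fin k → Bool)).filter (fun x => x i0 = false)).card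
      = ((Finset.univ : Finset (Fin k → Bool)).filter (fun x => ¬ x i0 = false)).card := by
    apply Finset.card_bij (fun x _ => negb x)
    · intro a ha
      simp only [Finset.mem_filter, Finset.mem_univ, true_and] at ha ⊢
      simp [negb, ha]
    · intro a ha b hb h
      have := congrArg negb h
      rwa [negb_negb, negb_negb] at this
    · intro b hb
      simp only [Finset.mem_filter, Finset.mem_univ, true_and] at hb
      refine ⟨negb b, ?_, negb_negb b⟩
      simp only [Finset.mem_filter, Finset.mem_univ, true_and, negb]
      simp [Bool.not_eq_false] at hb
      simp [hb]
  rw [hcard] at hsplit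
  rw [← hbij, ← two_mul, h2] at hsplit
  exact Nat.eq_of_mul_eq_mul_left (by norm_num) hsplit

theorem no_worse_than_average_count (m n : ℕ) (hm : 1 ≤ m) (hn : 1 ≤ n)
    (Q : Fin m → Fin n → ℝ) (c : Fin m → ℝ) (d : Fin n → ℝ) :
    2 ^ (m + n - 2) ≤
      ((Finset.univ : Finset ((Fin m → Bool) × (Fin n → Bool))).filter
        (fun p => fobj m n Q c d (bv p.1) (bv p.2) ≤ avgA m n Q c d)).card := by
  classical
  set A := avgA m n Q c d with hA
  set F := fun (x : Fin m → Bool) (y : Fin n → Bool) => fobj m n Q c d (bv x) (bv y) with hF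
  set G := ((Finset.univ : Finset ((Fin m → Bool) × (Fin n → Bool))).filter
      (fun p => F p.1 p.2 ≤ A)) with hG
  set i0 : Fin m := ⟨0, hm⟩
  set j0 : Fin n := ⟨0, hn⟩
  set R := ((Finset.univ : Finset ((Fin m → Bool) × (Fin n → Bool))).filter
      (fun p => p.1 i0 = false ∧ p.2 j0 = false)) with hR
  -- card R = 2^(m+n-2)
  have hRcard : R.card = 2 ^ (m + n - 2) := by
    have hRe : R = ((Finset.univ : Finset (Fin m → Bool)).filter (fun x => x i0 = false))
        ×ˢ ((Finset.univ : Finset (Fin n → Bool)).filter (fun y => y j0 = false)) := by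
      ext p
      simp [hR, Finset.mem_product]
    rw [hRe, Finset.card_product, card_filter_false hm i0, card_filter_false hn j0, ← pow_add]
    congr 1
    omega
  -- the selection map
  set pick : (Fin m → Bool) × (Fin n → Bool) → (Fin m → Bool) × (Fin n → Bool) :=
    fun p =>
      if F p.1 p.2 ≤ A then p
      else if F (negb p.1) p.2 ≤ A then (negb p.1, p.2)
      else if F p.1 (negb p.2) ≤ A then (p.1, negb p.2)
      else (negb p.1, negb p.2) with hpick
  have hgood : ∀ p : (Fin m → Bool) × (Fin n → Bool), F (pick p).1 (pick p).2 ≤ A := by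
    intro p
    have h4 := four_sum m n Q c d p.1 p.2
    have hAe : A = ((∑ i, ∑ j, Q i j) + 2 * (∑ i, c i) + 2 * (∑ j, d j)) / 4 :=
      avg_eq m n Q c d
    by_cases h1 : F p.1 p.2 ≤ A
    · simpa [hpick, h1] using h1
    · by_cases h2 : F (negb p.1) p.2 ≤ A
      · simpa [hpick, h1, h2] using h2
      · by_cases h3 : F p.1 (negb p.2) ≤ A
        · simpa [hpick, h1, h2, h3] using h3
        · have : F (negb p.1) (negb p.2) ≤ A := by
            push_neg at h1 h2 h3
            simp only [hF] at h1 h2 h3 ⊢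
            linarith
          simpa [hpick, h1, h2, h3] using this
  -- recovery map: left inverse of pick on R
  have hrec : ∀ p ∈ R,
      ((if (pick p).1 i0 then negb (pick p).1 else (pick p).1),
       (if (pick p).2 j0 then negb (pick p).2 else (pick p).2)) = p := by
    intro p hp
    rw [hR, Finset.mem_filter] at hp
    obtain ⟨-, hp1, hp2⟩ := hp
    have hn1 : negb p.1 i0 = true := by simp [negb, hp1]
    have hn2 : negb p.2 j0 = true := by simp [negb, hp2]
    by_cases h1 : F p.1 p.2 ≤ A
    · simp [hpick, h1, hp1, hp2]
    · by_cases h2 : F (negb p.1) p.2 ≤ A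
      · simp [hpick, h1, h2, hn1, hp2, negb_negb]
      · by_cases h3 : F p.1 (negb p.2) ≤ A
        · simp [hpick, h1, h2, h3, hp1, hn2, negb_negb]
        · simp [hpick, h1, h2, h3, hn1, hn2, negb_negb]
  rw [← hRcard]
  apply Finset.card_le_card_of_injOn pick
  · intro p hp
    rw [hG, Finset.mem_coe, Finset.mem_filter]
    exact ⟨Finset.mem_univ _, hgood p⟩
  · intro a ha b hb hab
    rw [← hrec a ha, ← hrec b hb, hab]
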